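/- arXiv:1310.0379 — 4 statements merged into one kernel-verified Lean document; each statement's English description precedes it below -/
import Mathlib

section
/- For fixed c > 0, n ≥ 0, and λ > 0 with n > λ or n < λ appropriately handled, the function g(b) = n·b − c·e^b − λ·|b| (on ℝ) attains its maximum at b* = ln(1 + S_λ(n − c)/c), where S_λ(x) = sign(x)·max(|x| − λ, 0) is the soft-thresholding operator, provided 1 + S_λ(n − c)/c > 0. -/
open Real

/-- The soft-thresholding operator. -/
noncomputable def softThresh (lam x : ℝ) : ℝ := Real.sign x * max (|x| - lam) 0

theorem soft_thresh_maximizer (c n lam : ℝ) (hc : 0 < c) (hn : 0 ≤ n) (hlam : 0 < lam)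
    (hpos : 0 < 1 + softThresh lam (n - c) / c) :
    IsMaxOn (fun b : ℝ => n * b - c * Real.exp b - lam * |b|) Set.univ
      (Real.log (1 + softThresh lam (n - c) / c)) := by
  set t := softThresh lam (n - c) with ht
  set B := Real.log (1 + t / c) with hB
  -- basic facts about t
  have hkey : |n - c - t| ≤ lam ∧ (n - c - t) * B = lam * |B| := by
    rcases le_or_gt |n - c| lam with hx | hx
    · have ht0 : t = 0 := by
        have : max (|n - c| - lam) 0 = 0 := max_eq_right (by linarith)
        simp [ht, softThresh, this]
      constructor
      · simpa [ht0] using hx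
      · simp [ht0, hB]
    · rcases lt_or_ge 0 (n - c) with hpos' | hneg
      · have habs : |n - c| = n - c := abs_of_pos hpos'
        have hsign : Real.sign (n - c) = 1 := Real.sign_of_pos hpos'
        have ht0 : t = n - c - lam := by
          rw [ht, softThresh, hsign, habs, max_eq_left (by linarith [habs ▸ hx])]
          ring
        have htpos : 0 < t := by rw [ht0]; linarith [habs ▸ hx]
        have hBpos : 0 ≤ B := by
          rw [hB]
          apply Real.log_nonneg
          have : 0 < t / c := div_pos htpos hc
          linarith
        constructor
        · rw [ht0]; simp [abs_of_pos hlam]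
        · rw [ht0, abs_of_nonneg hBpos]; ring
      · have hneg' : n - c < 0 := by
          rcases lt_or_eq_of_le hneg with h | h
          · exact h
          · exfalso; rw [h] at hx; simp at hx; linarith
        have habs : |n - c| = -(n - c) := abs_of_neg hneg'
        have hsign : Real.sign (n - c) = -1 := Real.sign_of_neg hneg'
        have ht0 : t = n - c + lam := by
          rw [ht, softThresh, hsign, habs, max_eq_left (by linarith [habs ▸ hx])]
          ring
        have htneg : t < 0 := by rw [ht0]; linarith [habs ▸ hx]
        have hBneg : B ≤ 0 := by
          rw [hB]
          apply Real.log_nonpos (le_of_lt hpos)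
          have : t / c < 0 := div_neg_of_neg_of_pos htneg hc
          linarith
        constructor
        · rw [ht0]
          have he : n - c - (n - c + lam) = -lam := by ring
          rw [he, abs_neg, abs_of_pos hlam]
        · rw [ht0, abs_of_nonpos hBneg]; ring
  obtain ⟨h1, h2⟩ := hkey
  have hexpB : Real.exp B = 1 + t / c := Real.exp_log hpos
  have hcexpB : c * Real.exp B = c + t := by
    rw [hexpB]; field_simp
  have hct : 0 < c + t := by
    rw [← hcexpB]; positivity
  intro b _
  simp only [Set.mem_setOf_eq]
  -- convexity bound
  have hconv : (c + t) * (1 + (b - B)) ≤ c * Real.exp b := by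
    have h3 : 1 + (b - B) ≤ Real.exp (b - B) := by
      linarith [Real.add_one_le_exp (b - B)]
    have h4 : c * Real.exp b = (c + t) * Real.exp (b - B) := by
      rw [← hcexpB, mul_assoc, ← Real.exp_add]; ring_nf
    rw [h4]
    exact mul_le_mul_of_nonneg_left h3 (le_of_lt hct)
  have hlin : (n - c - t) * b ≤ lam * |b| := by
    calc (n - c - t) * b ≤ |(n - c - t) * b| := le_abs_self _
      _ = |n - c - t| * |b| := abs_mul _ _
      _ ≤ lam * |b| := mul_le_mul_of_nonneg_right h1 (abs_nonneg b)
  have : n * b - c * Real.exp b - lam * |b| ≤ n * B - (c + t) - lam * |B| := by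
    nlinarith [hconv, hlin, h2]
  calc n * b - c * Real.exp b - lam * |b| ≤ n * B - (c + t) - lam * |B| := this
    _ = n * B - c * Real.exp B - lam * |B| := by rw [hcexpB]
end

section
/- Suppose n_1, …, n_J are independent with n_j ~ Poisson(N μ_j), where μ_j = θ for 1 ≤ j ≤ k and μ_j = θ e^{b_j} > θ for k < j ≤ J (all fixed, θ > 0). Let θ̂_k = (Σ_{j≤k order statistics}) /(kN) using the k smallest counts, and λ = √(max_j n_j). Then P(n_{(k+1)} > N θ̂_k + λ) → 1 as N → ∞, where n_{(1)} ≤ … ≤ n_{(J)} are the order statistics. -/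
open Real ProbabilityTheory Filter Finset
open scoped NNReal ENNReal

section Aux

/-! ### Poisson moment computations and Chebyshev bound -/

lemma pois_hasSum_id (r : ℝ≥0) :
    HasSum (fun n : ℕ => (n : ℝ) * poissonPMFReal r n) r := by
  have h0 : (fun n : ℕ => ((n+1 : ℕ) : ℝ) * poissonPMFReal r (n+1))
      = fun n : ℕ => (r : ℝ) * poissonPMFReal r n := by
    funext n
    simp only [poissonPMFReal, Nat.factorial_succ, Nat.cast_mul, Nat.cast_add, Nat.cast_one,
      pow_succ]
    field_simp
  have h1 : HasSum (fun n : ℕ => ((n+1 : ℕ) : ℝ) * poissonPMFReal r (n+1)) ((r:ℝ) * 1) := by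
    rw [h0]; exact (poissonPMFRealSum r).mul_left _
  have h2 := (hasSum_nat_add_iff (f := fun n : ℕ => (n : ℝ) * poissonPMFReal r n) 1).mp h1
  simpa using h2

lemma pois_hasSum_sq (r : ℝ≥0) :
    HasSum (fun n : ℕ => (n : ℝ) * ((n : ℝ) - 1) * poissonPMFReal r n) ((r:ℝ)^2) := by
  have h0 : (fun n : ℕ => ((n+2 : ℕ) : ℝ) * (((n+2 : ℕ) : ℝ) - 1) * poissonPMFReal r (n+2))
      = fun n : ℕ => (r : ℝ)^2 * poissonPMFReal r n := by
    funext n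
    simp only [poissonPMFReal, Nat.factorial_succ, Nat.cast_mul, Nat.cast_add, Nat.cast_ofNat,
      Nat.cast_one, pow_succ]
    push_cast
    field_simp
    ring
  have h1 : HasSum (fun n : ℕ => ((n+2 : ℕ) : ℝ) * (((n+2 : ℕ) : ℝ) - 1) * poissonPMFReal r (n+2))
      ((r:ℝ)^2 * 1) := by
    rw [h0]; exact (poissonPMFRealSum r).mul_left _
  have h2 := (hasSum_nat_add_iff
    (f := fun n : ℕ => (n : ℝ) * ((n : ℝ) - 1) * poissonPMFReal r n) 2).mp h1
  simpa [Finset.sum_range_succ] using h2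

lemma pois_hasSum_var (r : ℝ≥0) :
    HasSum (fun n : ℕ => ((n : ℝ) - r)^2 * poissonPMFReal r n) r := by
  have h := ((pois_hasSum_sq r).add ((pois_hasSum_id r).mul_left (1 - 2*(r:ℝ)))).add
    ((poissonPMFRealSum r).mul_left ((r:ℝ)^2))
  have heq : (fun n : ℕ => ((n : ℝ) * ((n : ℝ) - 1) * poissonPMFReal r n
        + (1 - 2*(r:ℝ)) * ((n : ℝ) * poissonPMFReal r n))
        + (r:ℝ)^2 * poissonPMFReal r n)
      = fun n : ℕ => ((n : ℝ) - r)^2 * poissonPMFReal r n := by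
    funext n; ring
  change HasSum (fun n : ℕ => ((n : ℝ) * ((n : ℝ) - 1) * poissonPMFReal r n
        + (1 - 2*(r:ℝ)) * ((n : ℝ) * poissonPMFReal r n))
        + (r:ℝ)^2 * poissonPMFReal r n) _ at h
  rw [heq] at h
  have heq2 : (r:ℝ)^2 + (1 - 2*(r:ℝ)) * (r:ℝ) + (r:ℝ)^2 * 1 = (r:ℝ) := by ring
  rwa [heq2] at h

lemma pois_chebyshev (r : ℝ≥0) {t : ℝ} (ht : 0 < t) :
    ∑' n : ℕ, (if t ≤ |(n : ℝ) - r| then poissonPMFReal r n else 0) ≤ r / t^2 := by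
  have hle : ∀ n : ℕ, (if t ≤ |(n : ℝ) - r| then poissonPMFReal r n else 0)
      ≤ ((n : ℝ) - r)^2 / t^2 * poissonPMFReal r n := by
    intro n
    split_ifs with h
    · have h1 : (1:ℝ) ≤ ((n : ℝ) - r)^2 / t^2 := by
        rw [le_div_iff₀ (by positivity), one_mul]
        calc t^2 ≤ |(n : ℝ) - r|^2 := by
              apply pow_le_pow_left₀ ht.le h
          _ = ((n : ℝ) - r)^2 := sq_abs _
      nlinarith [poissonPMFReal_nonneg (r := r) (n := n)]
    · have := poissonPMFReal_nonneg (r := r) (n := n)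
      positivity
  have hsum2 : HasSum (fun n : ℕ => ((n : ℝ) - r)^2 / t^2 * poissonPMFReal r n) ((r:ℝ)/t^2) := by
    have := (pois_hasSum_var r).div_const (t^2)
    have heq : (fun n : ℕ => ((n : ℝ) - r)^2 / t^2 * poissonPMFReal r n)
        = fun i : ℕ => ((i : ℝ) - r)^2 * poissonPMFReal r i / t^2 := by
      funext n
      ring
    rw [heq]; exact this
  have hsumI : Summable (fun n : ℕ => (if t ≤ |(n : ℝ) - r| then poissonPMFReal r n else 0)) := by
    apply Summable.of_nonneg_of_le (fun n => ?_) hle hsum2.summable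
    split_ifs
    · exact poissonPMFReal_nonneg
    · exact le_refl 0
  calc ∑' n : ℕ, (if t ≤ |(n : ℝ) - r| then poissonPMFReal r n else 0)
      ≤ ∑' n : ℕ, ((n : ℝ) - r)^2 / t^2 * poissonPMFReal r n :=
        Summable.tsum_le_tsum hle hsumI hsum2.summable
    _ = (r:ℝ)/t^2 := hsum2.tsum_eq

/-! ### Sums over product spaces, in `ℝ≥0∞` -/

lemma tsum_pi_fin : ∀ (J : ℕ) (g : Fin J → ℕ → ℝ≥0∞),
    ∑' nv : Fin J → ℕ, ∏ j, g j (nv j) = ∏ j, ∑' n : ℕ, g j n := by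
  intro J
  induction J with
  | zero =>
    intro g
    have h1 : ∑' nv : Fin 0 → ℕ, ∏ j, g j (nv j) = ∑' _nv : Fin 0 → ℕ, 1 := by simp
    rw [h1, tsum_eq_single (fun j : Fin 0 => 0)
      (fun b hb => absurd (funext fun j => j.elim0) hb)]
    simp
  | succ n ih =>
    intro g
    rw [← (Fin.consEquiv (fun _ : Fin (n+1) => ℕ)).tsum_eq, ENNReal.tsum_prod']
    simp only [Fin.consEquiv_apply, Fin.prod_univ_succ, Fin.cons_zero, Fin.cons_succ]
    calc ∑' (a : ℕ) (b : Fin n → ℕ), g 0 a * ∏ j : Fin n, g j.succ (b j)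
        = ∑' (a : ℕ), g 0 a * ∑' (b : Fin n → ℕ), ∏ j : Fin n, g j.succ (b j) := by
          congr 1; funext a; rw [ENNReal.tsum_mul_left]
      _ = (∑' (a : ℕ), g 0 a) * ∑' (b : Fin n → ℕ), ∏ j : Fin n, g j.succ (b j) := by
          rw [ENNReal.tsum_mul_right]
      _ = (∑' (a : ℕ), g 0 a) * ∏ j : Fin n, ∑' m : ℕ, g j.succ m := by rw [ih]

lemma tsum_pi_marginal {J : ℕ} (g : Fin J → ℕ → ℝ≥0∞) (j0 : Fin J) (A : ℕ → Prop)
    [DecidablePred A] (hg : ∀ j, j ≠ j0 → ∑' n : ℕ, g j n = 1) :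
    ∑' nv : Fin J → ℕ, (if A (nv j0) then (1:ℝ≥0∞) else 0) * ∏ j, g j (nv j)
      = ∑' n : ℕ, (if A n then g j0 n else 0) := by
  classical
  have key : ∀ nv : Fin J → ℕ, (if A (nv j0) then (1:ℝ≥0∞) else 0) * ∏ j, g j (nv j)
      = ∏ j, (if j = j0 then (if A (nv j) then g j (nv j) else 0) else g j (nv j)) := by
    intro nv
    by_cases h : A (nv j0)
    · rw [if_pos h, one_mul]
      apply Finset.prod_congr rfl
      intro j _
      by_cases hj : j = j0
      · subst hj; rw [if_pos rfl, if_pos h]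
      · rw [if_neg hj]
    · rw [if_neg h, zero_mul]
      symm
      apply Finset.prod_eq_zero (Finset.mem_univ j0)
      rw [if_pos rfl, if_neg h]
  calc ∑' nv : Fin J → ℕ, (if A (nv j0) then (1:ℝ≥0∞) else 0) * ∏ j, g j (nv j)
      = ∑' nv : Fin J → ℕ, ∏ j,
          (fun j m => if j = j0 then (if A m then g j m else 0) else g j m) j (nv j) :=
        tsum_congr key
    _ = ∏ j, ∑' n : ℕ, (if j = j0 then (if A n then g j n else 0) else g j n) :=
        tsum_pi_fin J (fun j m => if j = j0 then (if A m then g j m else 0) else g j m)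
    _ = ∑' n : ℕ, (if A n then g j0 n else 0) := by
        rw [← Finset.mul_prod_erase _ _ (Finset.mem_univ j0)]
        have h1 : (∑' n : ℕ, if j0 = j0 then (if A n then g j0 n else 0) else g j0 n)
            = ∑' n : ℕ, (if A n then g j0 n else 0) := by simp
        have h2 : (∏ j ∈ univ.erase j0,
            ∑' n : ℕ, if j = j0 then (if A n then g j n else 0) else g j n) = 1 := by
          apply Finset.prod_eq_one
          intro j hj
          simp only [Finset.mem_erase] at hj
          simp only [if_neg hj.1]
          exact hg j hj.1
        rw [h1, h2, mul_one]

end Aux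

/-- The counts sorted in increasing order: `sortedCounts nv` is the list of order
statistics `n_(1) ≤ … ≤ n_(J)` (0-indexed). -/
def sortedCounts {J : ℕ} (nv : Fin J → ℕ) : List ℕ :=
  (List.ofFn nv).insertionSort (· ≤ ·)

section SortedAux

lemma card_filter_lt {J k : ℕ} (hkJ : k ≤ J) :
    ((Finset.univ : Finset (Fin J)).filter (fun j : Fin J => (j:ℕ) < k)).card = k := by
  have h : ((Finset.univ : Finset (Fin J)).filter (fun j : Fin J => (j:ℕ) < k))
      = Finset.map ⟨Fin.castLE hkJ, Fin.castLE_injective hkJ⟩ Finset.univ := by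
    ext j
    simp only [Finset.mem_filter, Finset.mem_univ, true_and, Finset.mem_map,
      Function.Embedding.coeFn_mk]
    constructor
    · intro hj; exact ⟨⟨(j:ℕ), hj⟩, by ext; rfl⟩
    · rintro ⟨i, rfl⟩; exact i.isLt
  rw [h, Finset.card_map, Finset.card_univ, Fintype.card_fin]

lemma countP_finRange {J : ℕ} (p : Fin J → Prop) [DecidablePred p] :
    (List.finRange J).countP (fun j => decide (p j)) = (Finset.univ.filter p).card := by
  have h1 : (Finset.univ : Finset (Fin J)).val = ↑(List.finRange J) := by
    rw [Fin.univ_def]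
  rw [Finset.card_def, Finset.filter_val, h1, Multiset.filter_coe,
    Multiset.coe_card, ← List.countP_eq_length_filter]

lemma countP_sortedCounts {J : ℕ} (nv : Fin J → ℕ) (p : ℕ → Prop) [DecidablePred p] :
    (sortedCounts nv).countP (fun x => decide (p x))
      = (Finset.univ.filter (fun j => p (nv j))).card := by
  unfold sortedCounts
  rw [(List.perm_insertionSort _ _).countP_eq, List.ofFn_eq_map, List.countP_map]
  exact countP_finRange (fun j => p (nv j))

lemma length_sortedCounts {J : ℕ} (nv : Fin J → ℕ) : (sortedCounts nv).length = J := by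
  unfold sortedCounts
  rw [(List.perm_insertionSort _ _).length_eq, List.length_ofFn]

lemma sorted_sortedCounts {J : ℕ} (nv : Fin J → ℕ) :
    (sortedCounts nv).Pairwise (· ≤ ·) := List.pairwise_insertionSort _ _

lemma sorted_main {J k : ℕ} (hkJ : k < J) (nv : Fin J → ℕ) (c1 c2 : ℝ)
    (h1 : ∀ j : Fin J, (j:ℕ) < k → ((nv j : ℕ):ℝ) < c1)
    (h2 : ∀ j : Fin J, k ≤ (j:ℕ) → c2 < ((nv j : ℕ):ℝ)) :
    (∀ x ∈ (sortedCounts nv).take k, (x:ℝ) < c1) ∧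
      c2 < (((sortedCounts nv).getD k 0 : ℕ):ℝ) := by
  classical
  set L := sortedCounts nv with hLdef
  have hlen : L.length = J := length_sortedCounts nv
  have hsort : L.Pairwise (· ≤ ·) := sorted_sortedCounts nv
  have hkL : k < L.length := by omega
  have hcount1 : k ≤ L.countP (fun x : ℕ => decide ((x:ℝ) < c1)) := by
    rw [hLdef, countP_sortedCounts]
    calc k = ((Finset.univ : Finset (Fin J)).filter (fun j : Fin J => (j:ℕ) < k)).card :=
          (card_filter_lt hkJ.le).symm
      _ ≤ _ := Finset.card_le_card (fun j hj => by
          simp only [Finset.mem_filter, Finset.mem_univ, true_and] at *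
          exact h1 j hj)
  have hcount2 : L.countP (fun x : ℕ => decide ((x:ℝ) ≤ c2)) ≤ k := by
    rw [hLdef, countP_sortedCounts]
    calc _ ≤ ((Finset.univ : Finset (Fin J)).filter (fun j : Fin J => (j:ℕ) < k)).card :=
          Finset.card_le_card (fun j hj => by
            simp only [Finset.mem_filter, Finset.mem_univ, true_and] at *
            by_contra hjk
            exact absurd hj (not_le.mpr (h2 j (le_of_not_gt hjk))))
      _ = k := card_filter_lt hkJ.le
  constructor
  · intro x hx
    rw [List.mem_take_iff_getElem] at hx
    obtain ⟨i, hi, hxi⟩ := hx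
    have hik : i < k := lt_of_lt_of_le hi (min_le_left _ _)
    have hidx : i < L.length := lt_of_lt_of_le hi (min_le_right _ _)
    by_contra hxc
    push_neg at hxc
    have hdrop : ∀ y ∈ L.drop i, ¬ ((y:ℝ) < c1) := by
      intro y hy
      have hcons : L.drop i = L[i] :: L.drop (i+1) := List.drop_eq_getElem_cons hidx
      have hxy : x ≤ y := by
        rw [hcons] at hy
        rcases List.mem_cons.mp hy with h | h
        · rw [← hxi, h]
        · rw [← hxi]
          have hsd : (L.drop i).Pairwise (· ≤ ·) := hsort.sublist (List.drop_sublist _ _)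
          rw [hcons] at hsd
          exact List.rel_of_pairwise_cons hsd h
      push_neg
      calc c1 ≤ (x:ℝ) := hxc
        _ ≤ (y:ℝ) := Nat.cast_le.mpr hxy
    have hle : L.countP (fun x : ℕ => decide ((x:ℝ) < c1)) ≤ i := by
      conv_lhs => rw [← List.take_append_drop i L]
      rw [List.countP_append]
      have h0 : (L.drop i).countP (fun x : ℕ => decide ((x:ℝ) < c1)) = 0 :=
        List.countP_eq_zero.mpr (by intro a ha; simpa using hdrop a ha)
      rw [h0, add_zero]
      exact le_trans List.countP_le_length (by rw [List.length_take]; exact min_le_left _ _)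
    omega
  · rw [List.getD_eq_getElem _ _ hkL]
    by_contra hc2
    push_neg at hc2
    have hmono : ∀ (i : ℕ) (hi : i < L.length), i ≤ k → L[i] ≤ L[k] := by
      intro i hi hik
      rcases eq_or_lt_of_le hik with h | h
      · subst h; exact le_refl _
      · exact List.pairwise_iff_getElem.mp hsort i k hi hkL h
    have hall : ∀ y ∈ L.take (k+1), ((y:ℝ) ≤ c2) := by
      intro y hy
      rw [List.mem_take_iff_getElem] at hy
      obtain ⟨i, hi, rfl⟩ := hy
      have hidx : i < L.length := lt_of_lt_of_le hi (min_le_right _ _)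
      have : L[i] ≤ L[k] := hmono i hidx (by
        have := lt_of_lt_of_le hi (min_le_left _ _); omega)
      calc ((L[i] : ℕ):ℝ) ≤ ((L[k] : ℕ):ℝ) := Nat.cast_le.mpr this
        _ ≤ c2 := hc2
    have hcnt : (L.take (k+1)).countP (fun x : ℕ => decide ((x:ℝ) ≤ c2))
        = (L.take (k+1)).length :=
      List.countP_eq_length.mpr (fun a ha => by simpa using hall a ha)
    have hlt : (L.take (k+1)).length = k+1 := by rw [List.length_take]; omega
    have : k + 1 ≤ L.countP (fun x : ℕ => decide ((x:ℝ) ≤ c2)) := by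
      calc k+1 = (L.take (k+1)).countP (fun x : ℕ => decide ((x:ℝ) ≤ c2)) := by rw [hcnt, hlt]
        _ ≤ L.countP (fun x : ℕ => decide ((x:ℝ) ≤ c2)) :=
          ((List.take_sublist _ _).countP_le)
    omega

lemma list_sum_lt : ∀ (l : List ℕ) (c : ℝ), l ≠ [] → (∀ x ∈ l, (x:ℝ) < c) →
    ((l.sum : ℕ):ℝ) < l.length * c := by
  intro l
  induction l with
  | nil => intro c h; exact absurd rfl h
  | cons a t ih =>
    intro c _ h
    cases t with
    | nil => simpa using h a (by simp)
    | cons b t' =>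
      have h1 := ih c (by simp) (fun x hx => h x (List.mem_cons_of_mem _ hx))
      have h2 := h a List.mem_cons_self
      have hs : (((a :: b :: t').sum : ℕ):ℝ) = (a:ℝ) + (((b :: t').sum : ℕ):ℝ) := by
        rw [List.sum_cons]; push_cast; ring
      have hl : (((a :: b :: t').length : ℕ):ℝ) = (((b :: t').length : ℕ):ℝ) + 1 := by
        rw [List.length_cons]; push_cast; ring
      rw [hs, hl]
      nlinarith

end SortedAux

set_option maxHeartbeats 2000000 in
theorem order_statistic_exceeds_threshold (J k : ℕ) (hk : 1 ≤ k) (hkJ : k < J)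
    (θ : NNReal) (hθ : 0 < θ) (μ : Fin J → NNReal)
    (hμ1 : ∀ j : Fin J, (j : ℕ) < k → μ j = θ)
    (hμ2 : ∀ j : Fin J, k ≤ (j : ℕ) → θ < μ j) :
    Tendsto (fun N : ℕ =>
        ∑' nv : Fin J → ℕ,
          if ((((sortedCounts nv).take k).sum : ℝ) / k
                + Real.sqrt ((Finset.univ.sup nv : ℕ) : ℝ) < ((sortedCounts nv).getD k 0 : ℝ))
          then ∏ j, poissonPMFReal (N * μ j) (nv j) else 0)
      atTop (nhds 1) := by
  classical
  -- basic setup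
  set j0 : Fin J := ⟨k, hkJ⟩ with hj0
  have hj0k : k ≤ (j0 : ℕ) := le_refl k
  have hne : (Finset.univ : Finset (Fin J)).Nonempty := ⟨j0, Finset.mem_univ _⟩
  set S : Finset (Fin J) := Finset.univ.filter (fun j : Fin J => k ≤ (j:ℕ)) with hSdef
  have hSne : S.Nonempty := ⟨j0, by simp [hSdef, hj0k]⟩
  set m : ℝ := S.inf' hSne (fun j => (μ j : ℝ)) with hmdef
  have hθm : (θ:ℝ) < m := by
    rw [hmdef, Finset.lt_inf'_iff]
    intro j hj
    simp only [hSdef, Finset.mem_filter, Finset.mem_univ, true_and] at hj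
    exact_mod_cast hμ2 j hj
  set ε : ℝ := (m - θ)/3 with hεdef
  have hε : 0 < ε := by rw [hεdef]; linarith
  set Msup : ℝ := Finset.univ.sup' hne (fun j => (μ j : ℝ)) with hMsupdef
  set Csum : ℝ := ∑ j, (μ j : ℝ) with hCsumdef
  have hCsum0 : 0 ≤ Csum := Finset.sum_nonneg (fun j _ => (μ j).coe_nonneg)
  -- the event
  set E : (Fin J → ℕ) → Prop := fun nv =>
    ((((sortedCounts nv).take k).sum : ℝ) / k
      + Real.sqrt ((Finset.univ.sup nv : ℕ) : ℝ) < ((sortedCounts nv).getD k 0 : ℝ)) with hEdef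
  -- the ENNReal pmf and product
  set g : ℕ → Fin J → ℕ → ℝ≥0∞ := fun N j n =>
    ENNReal.ofReal (poissonPMFReal ((N : ℝ≥0) * μ j) n) with hgdef
  set F : ℕ → (Fin J → ℕ) → ℝ≥0∞ := fun N nv => ∏ j, g N j (nv j) with hFdef
  have hg1 : ∀ N j, ∑' n : ℕ, g N j n = 1 := by
    intro N j
    rw [hgdef]
    rw [← ENNReal.ofReal_tsum_of_nonneg (fun n => poissonPMFReal_nonneg)
      (poissonPMFRealSum _).summable,
      show (∑' n : ℕ, poissonPMFReal ((N : ℝ≥0) * μ j) n) = 1 from (poissonPMFRealSum _).tsum_eq, ENNReal.ofReal_one]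
  have hFtot : ∀ N, ∑' nv : Fin J → ℕ, F N nv = 1 := by
    intro N
    rw [hFdef]
    rw [tsum_pi_fin J (g N)]
    rw [Finset.prod_congr rfl (fun j _ => hg1 N j), Finset.prod_const_one]
  set A : ℕ → ℝ≥0∞ := fun N => ∑' nv : Fin J → ℕ, (if E nv then F N nv else 0) with hAdef
  set B : ℕ → ℝ≥0∞ := fun N => ∑' nv : Fin J → ℕ, (if E nv then 0 else F N nv) with hBdef
  have hsplit : ∀ N, A N + B N = 1 := by
    intro N
    rw [hAdef, hBdef, ← ENNReal.tsum_add, ← hFtot N]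
    apply tsum_congr
    intro nv
    split_ifs <;> simp
  have hA1 : ∀ N, A N ≤ 1 := fun N => le_trans le_self_add (le_of_eq (hsplit N))
  have hB1 : ∀ N, B N ≤ 1 := fun N => le_trans le_add_self (le_of_eq (hsplit N))
  -- the real-valued sum is (A N).toReal
  have hreal : ∀ N : ℕ, (∑' nv : Fin J → ℕ,
      if ((((sortedCounts nv).take k).sum : ℝ) / k
          + Real.sqrt ((Finset.univ.sup nv : ℕ) : ℝ) < ((sortedCounts nv).getD k 0 : ℝ))
      then ∏ j, poissonPMFReal (N * μ j) (nv j) else 0) = (A N).toReal := by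
    intro N
    rw [hAdef, ENNReal.tsum_toReal_eq (fun nv => by
      split_ifs
      · exact (ENNReal.prod_lt_top (fun j _ => ENNReal.ofReal_lt_top)).ne
      · exact ENNReal.zero_ne_top)]
    apply tsum_congr
    intro nv
    by_cases h : E nv
    · rw [if_pos h, if_pos (by exact h), hFdef, ENNReal.toReal_prod]
      apply Finset.prod_congr rfl
      intro j _
      rw [hgdef, ENNReal.toReal_ofReal poissonPMFReal_nonneg]
    · rw [if_neg h, if_neg (by exact h), ENNReal.toReal_zero]
  -- deterministic part: for large N, concentration implies the event
  have hdet : ∀ᶠ N : ℕ in atTop, ∀ nv : Fin J → ℕ,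
      (∀ j, |(nv j : ℝ) - (N:ℝ) * (μ j : ℝ)| < ε * N) → E nv := by
    have h1 : ∀ᶠ N : ℕ in atTop, (Msup + ε)/ε^2 < (N:ℝ) :=
      tendsto_natCast_atTop_atTop.eventually_gt_atTop _
    have h2 : ∀ᶠ N : ℕ in atTop, 1 ≤ N := eventually_ge_atTop 1
    filter_upwards [h1, h2] with N hN1 hN2
    intro nv hG
    have hN0 : (1:ℝ) ≤ (N:ℝ) := by exact_mod_cast hN2
    have hNpos : (0:ℝ) < N := by linarith
    set c1 : ℝ := (N:ℝ) * θ + ε * N with hc1def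
    set c2 : ℝ := (N:ℝ) * θ + 2 * (ε * N) with hc2def
    have hmε : m = (θ:ℝ) + 3 * ε := by rw [hεdef]; ring
    have hsm := sorted_main hkJ nv c1 c2 (fun j hj => by
        have hμj : μ j = θ := hμ1 j hj
        have := hG j
        rw [hμj] at this
        rw [abs_lt] at this
        rw [hc1def]; linarith [this.2])
      (fun j hj => by
        have hmj : m ≤ (μ j : ℝ) := Finset.inf'_le _ (by
          simp only [hSdef, Finset.mem_filter, Finset.mem_univ, true_and]; exact hj)
        have := hG j
        rw [abs_lt] at this
        have h3 : (N:ℝ) * m - ε * N ≤ (N:ℝ) * (μ j : ℝ) - ε * N := by nlinarith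
        rw [hc2def]
        have : (N:ℝ) * (μ j:ℝ) - ε * N < (nv j : ℝ) := by linarith [this.1]
        nlinarith)
    obtain ⟨htake, hgetD⟩ := hsm
    -- sum bound
    have hlenL : (sortedCounts nv).length = J := length_sortedCounts nv
    have htlen : ((sortedCounts nv).take k).length = k := by
      rw [List.length_take]; omega
    have htne : (sortedCounts nv).take k ≠ [] := by
      intro h
      rw [h] at htlen
      simp at htlen; omega
    have hsum : ((((sortedCounts nv).take k).sum : ℕ):ℝ) < k * c1 := by
      have := list_sum_lt _ c1 htne htake
      rwa [htlen] at this
    have hdiv : ((((sortedCounts nv).take k).sum : ℕ):ℝ) / k < c1 := by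
      rw [div_lt_iff₀ (by exact_mod_cast hk : (0:ℝ) < k)]
      linarith [hsum]
    -- sup bound
    obtain ⟨js, _, hjs⟩ := Finset.exists_mem_eq_sup (Finset.univ : Finset (Fin J)) hne nv
    have hsupb : ((Finset.univ.sup nv : ℕ):ℝ) < (N:ℝ) * Msup + ε * N := by
      rw [hjs]
      have := hG js
      rw [abs_lt] at this
      have hμle : (μ js : ℝ) ≤ Msup := by
        rw [hMsupdef]; exact Finset.le_sup' (fun j => ((μ j : ℝ))) (Finset.mem_univ js)
      nlinarith [this.2]
    have hsqrt : Real.sqrt ((Finset.univ.sup nv : ℕ):ℝ) < ε * N := by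
      rw [show ((Finset.univ.sup nv : ℕ):ℝ) = ((Finset.univ.sup nv : ℕ):ℝ) from rfl]
      have hlt : ((Finset.univ.sup nv : ℕ):ℝ) < (ε * N)^2 := by
        have hMs : (θ:ℝ) ≤ Msup := by
          calc (θ:ℝ) ≤ (μ j0 : ℝ) := by exact_mod_cast (hμ2 j0 hj0k).le
            _ ≤ Msup := by rw [hMsupdef]; exact Finset.le_sup' (fun j => ((μ j : ℝ))) (Finset.mem_univ j0)
        have key : (N:ℝ) * Msup + ε * N < (ε * N)^2 := by
          have h4 : (Msup + ε) < ε^2 * N := by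
            rw [div_lt_iff₀ (by positivity)] at hN1
            nlinarith
          nlinarith
        linarith
      calc Real.sqrt ((Finset.univ.sup nv : ℕ):ℝ) < Real.sqrt ((ε * N)^2) := by
            apply Real.sqrt_lt_sqrt (Nat.cast_nonneg _) hlt
        _ = ε * N := Real.sqrt_sq (by positivity)
    rw [hEdef]
    calc ((((sortedCounts nv).take k).sum : ℕ):ℝ) / k
        + Real.sqrt ((Finset.univ.sup nv : ℕ):ℝ)
        < c1 + ε * N := by linarith
      _ = c2 := by rw [hc1def, hc2def]; ring
      _ < _ := hgetD
  -- probabilistic part: bound B N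
  have hbound : ∀ᶠ N : ℕ in atTop, B N ≤ ENNReal.ofReal (Csum / (ε^2 * N)) := by
    filter_upwards [hdet, eventually_ge_atTop 1] with N hdetN hN1
    have hN0 : (0:ℝ) < N := by exact_mod_cast hN1
    have htpos : 0 < ε * N := by positivity
    -- pointwise bound
    have hpt : ∀ nv : Fin J → ℕ, (if E nv then 0 else F N nv)
        ≤ ∑ j : Fin J, (if ε * N ≤ |(nv j : ℝ) - (N:ℝ) * (μ j : ℝ)| then (1:ℝ≥0∞) else 0)
            * F N nv := by
      intro nv
      by_cases h : E nv
      · rw [if_pos h]; exact zero_le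
      · rw [if_neg h]
        have : ∃ j, ε * N ≤ |(nv j : ℝ) - (N:ℝ) * (μ j : ℝ)| := by
          by_contra hco
          push_neg at hco
          exact h (hdetN nv hco)
        obtain ⟨jb, hjb⟩ := this
        calc F N nv = (if ε * N ≤ |(nv jb : ℝ) - (N:ℝ) * (μ jb : ℝ)| then (1:ℝ≥0∞) else 0)
              * F N nv := by rw [if_pos hjb, one_mul]
          _ ≤ _ := Finset.single_le_sum (f := fun j =>
              (if ε * N ≤ |(nv j : ℝ) - (N:ℝ) * (μ j : ℝ)| then (1:ℝ≥0∞) else 0) * F N nv)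
              (fun j _ => zero_le) (Finset.mem_univ jb)
    have hmarg : ∀ j : Fin J,
        (∑' nv : Fin J → ℕ, (if ε * N ≤ |(nv j : ℝ) - (N:ℝ) * (μ j : ℝ)| then (1:ℝ≥0∞) else 0)
          * F N nv) ≤ ENNReal.ofReal ((μ j : ℝ) / (ε^2 * N)) := by
      intro j
      rw [hFdef]
      rw [tsum_pi_marginal (g N) j (fun n => ε * N ≤ |(n : ℝ) - (N:ℝ) * (μ j : ℝ)|)
        (fun j' _ => hg1 N j')]
      have hconv : (∑' n : ℕ, if ε * N ≤ |(n : ℝ) - (N:ℝ) * (μ j : ℝ)| then g N j n else 0)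
          = ENNReal.ofReal (∑' n : ℕ,
              if ε * N ≤ |(n : ℝ) - ((N : ℝ≥0) * μ j : ℝ≥0)| then
                poissonPMFReal ((N : ℝ≥0) * μ j) n else 0) := by
        rw [ENNReal.ofReal_tsum_of_nonneg (fun n => by
            split_ifs
            · exact poissonPMFReal_nonneg
            · exact le_refl 0)
          (Summable.of_nonneg_of_le (fun n => by
              split_ifs
              · exact poissonPMFReal_nonneg
              · exact le_refl 0)
            (fun n => by
              split_ifs
              · exact le_refl _
              · exact poissonPMFReal_nonneg)
            (poissonPMFRealSum ((N : ℝ≥0) * μ j)).summable)]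
        apply tsum_congr
        intro n
        have hcast : (((N : ℝ≥0) * μ j : ℝ≥0) : ℝ) = (N:ℝ) * (μ j : ℝ) := by push_cast; ring
        rw [hcast, hgdef]
        split_ifs
        · rfl
        · exact ENNReal.ofReal_zero.symm
      rw [hconv]
      apply ENNReal.ofReal_le_ofReal
      calc (∑' n : ℕ, if ε * N ≤ |(n : ℝ) - ((N : ℝ≥0) * μ j : ℝ≥0)| then
              poissonPMFReal ((N : ℝ≥0) * μ j) n else 0)
          ≤ (((N : ℝ≥0) * μ j : ℝ≥0) : ℝ) / (ε * N)^2 := pois_chebyshev _ htpos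
        _ = (μ j : ℝ) / (ε^2 * N) := by
            push_cast
            field_simp
    calc B N ≤ ∑' nv : Fin J → ℕ, ∑ j : Fin J,
          (if ε * N ≤ |(nv j : ℝ) - (N:ℝ) * (μ j : ℝ)| then (1:ℝ≥0∞) else 0) * F N nv := by
          rw [hBdef]; exact ENNReal.tsum_le_tsum hpt
      _ = ∑ j : Fin J, ∑' nv : Fin J → ℕ,
          (if ε * N ≤ |(nv j : ℝ) - (N:ℝ) * (μ j : ℝ)| then (1:ℝ≥0∞) else 0) * F N nv := by
          rw [Summable.tsum_finsetSum (fun j _ => ENNReal.summable)]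
      _ ≤ ∑ j : Fin J, ENNReal.ofReal ((μ j : ℝ) / (ε^2 * N)) :=
          Finset.sum_le_sum (fun j _ => hmarg j)
      _ = ENNReal.ofReal (Csum / (ε^2 * N)) := by
          rw [← ENNReal.ofReal_sum_of_nonneg (fun j _ => by positivity)]
          congr 1
          rw [hCsumdef, Finset.sum_div]
  -- conclude
  have hBto0 : Tendsto (fun N => (B N).toReal) atTop (nhds 0) := by
    apply squeeze_zero' (Filter.Eventually.of_forall (fun N => ENNReal.toReal_nonneg))
    · filter_upwards [hbound, eventually_ge_atTop 1] with N hb hN1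
      calc (B N).toReal ≤ (ENNReal.ofReal (Csum / (ε^2 * N))).toReal :=
            ENNReal.toReal_mono ENNReal.ofReal_ne_top hb
        _ = Csum / (ε^2 * N) := ENNReal.toReal_ofReal (by
            have : (0:ℝ) < N := by exact_mod_cast hN1
            positivity)
    · have : Tendsto (fun N : ℕ => (Csum / ε^2) * (1/(N:ℝ))) atTop (nhds ((Csum/ε^2) * 0)) :=
        tendsto_one_div_atTop_nhds_zero_nat.const_mul _
      simp only [mul_zero] at this
      apply this.congr
      intro N
      field_simp
  have hAeq : ∀ N, (A N).toReal = 1 - (B N).toReal := by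
    intro N
    have h := hsplit N
    have hAne : A N ≠ ⊤ := (lt_of_le_of_lt (hA1 N) ENNReal.one_lt_top).ne
    have hBne : B N ≠ ⊤ := (lt_of_le_of_lt (hB1 N) ENNReal.one_lt_top).ne
    have := congrArg ENNReal.toReal h
    rw [ENNReal.toReal_add hAne hBne, ENNReal.toReal_one] at this
    linarith
  have hfinal : Tendsto (fun N => (A N).toReal) atTop (nhds 1) := by
    have : Tendsto (fun N => 1 - (B N).toReal) atTop (nhds (1 - 0)) :=
      tendsto_const_nhds.sub hBto0
    simp only [sub_zero] at this
    exact this.congr (fun N => (hAeq N).symm)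
  apply hfinal.congr
  intro N
  exact (hreal N).symm
end

section
/- In the setting of the previous result, the two-step estimator θ̂ = θ̂_t (the average over the t counts not flagged as biased, where t is chosen as the smallest index with n_{(t+1)} > Nθ̂_t + λ) converges in probability to θ as N → ∞ on the event {1 ≤ t ≤ k}, whose probability tends to 1. -/
open Real ProbabilityTheory Filter Finset

open scoped Classical
open scoped NNReal ENNReal

/-- The tuning parameter `λ = √(max_j n_j)`. -/
noncomputable def lamOf {J : ℕ} (nv : Fin J → ℕ) : ℝ :=
  Real.sqrt ((Finset.univ.sup nv : ℕ) : ℝ)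

/-- `θ̂_t`, the average of the `t` smallest counts divided by `N`. -/
noncomputable def thetaHat {J : ℕ} (N : ℕ) (nv : Fin J → ℕ) (t : ℕ) : ℝ :=
  (((sortedCounts nv).take t).sum : ℝ) / (t * N)

/-- `t`, the smallest index `1 ≤ t < J` with `n_(t+1) > N θ̂_t + λ`, or `0` if none exists. -/
noncomputable def tIndex (J N : ℕ) (nv : Fin J → ℕ) : ℕ :=
  sInf {t | 1 ≤ t ∧ t < J ∧
    (N : ℝ) * thetaHat N nv t + lamOf nv < (((sortedCounts nv).getD t 0 : ℕ) : ℝ)}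


lemma aux_countP_ofFn : ∀ {n : ℕ} (f : Fin n → ℕ) (p : ℕ → Prop),
    (List.ofFn f).countP (fun m => decide (p m)) = (Finset.univ.filter (fun i => p (f i))).card := by
  intro n
  induction n with
  | zero => intro f p; simp
  | succ n ih =>
    intro f p
    rw [List.ofFn_succ, List.countP_cons, ih (fun i => f i.succ) p]
    rw [Finset.card_filter, Finset.card_filter, Fin.sum_univ_succ]
    simp [add_comm]

lemma aux_monotone_filter_card {n : ℕ} (g : Fin n → ℕ) (hm : Monotone g) (B : ℝ) (i : Fin n) :
    (i : ℕ) < (Finset.univ.filter (fun j => (g j : ℝ) ≤ B)).card ↔ (g i : ℝ) ≤ B := by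
  set S := Finset.univ.filter (fun j : Fin n => (g j : ℝ) ≤ B) with hS
  constructor
  · intro h
    by_contra hgi
    have hsub : S ⊆ Finset.Iio i := by
      intro j hj
      simp only [hS, Finset.mem_filter] at hj
      rw [Finset.mem_Iio]
      by_contra hij
      exact hgi (le_trans (by exact_mod_cast Nat.cast_le.mpr (hm (le_of_not_gt hij))) hj.2)
    have := Finset.card_le_card hsub
    rw [Fin.card_Iio] at this
    omega
  · intro h
    have hsub : Finset.Iic i ⊆ S := by
      intro j hj
      rw [Finset.mem_Iic] at hj
      simp only [hS, Finset.mem_filter]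
      exact ⟨Finset.mem_univ _, le_trans (by exact_mod_cast Nat.cast_le.mpr (hm hj)) h⟩
    have := Finset.card_le_card hsub
    rw [Fin.card_Iic] at this
    omega

lemma aux_tsum_pi : ∀ {n : ℕ} (g : Fin n → ℕ → ℝ≥0∞),
    ∑' nv : Fin n → ℕ, ∏ j, g j (nv j) = ∏ j, ∑' m, g j m := by
  intro n
  induction n with
  | zero =>
    intro g
    rw [tsum_eq_single (fun (i : Fin 0) => (0:ℕ)) (by intro b hb; exact absurd (funext fun i => i.elim0) hb), Finset.prod_of_isEmpty, Finset.prod_of_isEmpty]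
  | succ n ih =>
    intro g
    have he := (Fin.consEquiv (fun _ : Fin (n+1) => ℕ)).tsum_eq (fun nv => ∏ j, g j (nv j))
    rw [← he, ENNReal.tsum_prod', Fin.prod_univ_succ (fun j : Fin (n+1) => ∑' m, g j m)]
    simp only [Fin.consEquiv_apply, Fin.prod_univ_succ, Fin.cons_zero, Fin.cons_succ]
    calc ∑' (a : ℕ) (bv : Fin n → ℕ), g 0 a * ∏ j, g j.succ (bv j)
        = ∑' (a : ℕ), g 0 a * ∑' bv : Fin n → ℕ, ∏ j, g j.succ (bv j) := by
          congr 1; ext a; exact ENNReal.tsum_mul_left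
      _ = (∑' a, g 0 a) * ∑' bv : Fin n → ℕ, ∏ j, g j.succ (bv j) := ENNReal.tsum_mul_right
      _ = (∑' a, g 0 a) * ∏ j : Fin n, ∑' m, g j.succ m := by rw [ih]



lemma aux_pois_mgf (r : ℝ≥0) (x : ℝ) :
    HasSum (fun m : ℕ => x ^ m * poissonPMFReal r m) (Real.exp ((r : ℝ) * (x - 1))) := by
  have h := (NormedSpace.expSeries_div_hasSum_exp (x * (r : ℝ))).mul_left (Real.exp (-(r : ℝ)))
  rw [← Real.exp_eq_exp_ℝ] at h
  have : Real.exp (-(r:ℝ)) * Real.exp (x * r) = Real.exp ((r:ℝ) * (x - 1)) := by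
    rw [← Real.exp_add]; ring_nf
  rw [this] at h
  convert h using 2 with m
  · rfl
  unfold poissonPMFReal
  rw [mul_pow]
  ring

lemma aux_pois_summable (r : ℝ≥0) : Summable (poissonPMFReal r) :=
  (poissonPMFRealSum r).summable

lemma aux_chernoff_upper (r : ℝ≥0) (a x : ℝ) (hx : 1 < x) :
    ∑' m : ℕ, (if a < (m : ℝ) then poissonPMFReal r m else 0)
      ≤ Real.exp ((r : ℝ) * (x - 1) - a * Real.log x) := by
  have hx0 : 0 < x := lt_trans one_pos hx
  have hmgf := (aux_pois_mgf r x).mul_right (Real.exp (-(a * Real.log x)))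
  have hpt : ∀ m : ℕ, (if a < (m : ℝ) then poissonPMFReal r m else 0)
      ≤ x ^ m * poissonPMFReal r m * Real.exp (-(a * Real.log x)) := by
    intro m
    split_ifs with h
    · have hxm : x ^ m = Real.exp (m * Real.log x) := by
        rw [← Real.log_pow, Real.exp_log (pow_pos hx0 m)]
      rw [hxm, mul_comm _ (poissonPMFReal r m), mul_assoc, ← Real.exp_add]
      nth_rewrite 1 [← mul_one (poissonPMFReal r m)]
      apply mul_le_mul_of_nonneg_left _ poissonPMFReal_nonneg
      rw [← Real.exp_zero]
      apply Real.exp_le_exp.mpr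
      have hlog : 0 < Real.log x := Real.log_pos hx
      nlinarith
    · exact mul_nonneg (mul_nonneg (pow_nonneg hx0.le m) poissonPMFReal_nonneg) (Real.exp_nonneg _)
  calc ∑' m : ℕ, (if a < (m : ℝ) then poissonPMFReal r m else 0)
      ≤ ∑' m : ℕ, x ^ m * poissonPMFReal r m * Real.exp (-(a * Real.log x)) := by
        apply Summable.tsum_le_tsum hpt _ hmgf.summable
        apply Summable.of_nonneg_of_le _ hpt hmgf.summable
        intro m; split_ifs; exacts [poissonPMFReal_nonneg, le_rfl]
    _ = Real.exp ((r : ℝ) * (x - 1) - a * Real.log x) := by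
        rw [hmgf.tsum_eq, ← Real.exp_add]; ring_nf

lemma aux_chernoff_lower (r : ℝ≥0) (b x : ℝ) (hx0 : 0 < x) (hx1 : x ≤ 1) :
    ∑' m : ℕ, (if (m : ℝ) < b then poissonPMFReal r m else 0)
      ≤ Real.exp ((r : ℝ) * (x - 1) - b * Real.log x) := by
  have hmgf := (aux_pois_mgf r x).mul_right (Real.exp (-(b * Real.log x)))
  have hpt : ∀ m : ℕ, (if (m : ℝ) < b then poissonPMFReal r m else 0)
      ≤ x ^ m * poissonPMFReal r m * Real.exp (-(b * Real.log x)) := by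
    intro m
    split_ifs with h
    · have hxm : x ^ m = Real.exp (m * Real.log x) := by
        rw [← Real.log_pow, Real.exp_log (pow_pos hx0 m)]
      rw [hxm, mul_comm _ (poissonPMFReal r m), mul_assoc, ← Real.exp_add]
      nth_rewrite 1 [← mul_one (poissonPMFReal r m)]
      apply mul_le_mul_of_nonneg_left _ poissonPMFReal_nonneg
      rw [← Real.exp_zero]
      apply Real.exp_le_exp.mpr
      have hlog : Real.log x ≤ 0 := Real.log_nonpos (le_of_lt hx0) hx1
      nlinarith
    · exact mul_nonneg (mul_nonneg (pow_nonneg hx0.le m) poissonPMFReal_nonneg) (Real.exp_nonneg _)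
  calc ∑' m : ℕ, (if (m : ℝ) < b then poissonPMFReal r m else 0)
      ≤ ∑' m : ℕ, x ^ m * poissonPMFReal r m * Real.exp (-(b * Real.log x)) := by
        apply Summable.tsum_le_tsum hpt _ hmgf.summable
        apply Summable.of_nonneg_of_le _ hpt hmgf.summable
        intro m; split_ifs; exacts [poissonPMFReal_nonneg, le_rfl]
    _ = Real.exp ((r : ℝ) * (x - 1) - b * Real.log x) := by
        rw [hmgf.tsum_eq, ← Real.exp_add]; ring_nf

lemma claimA {J : ℕ} (k N : ℕ) (hk : 1 ≤ k) (hkJ : k < J) (hN : 1 ≤ N)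
    (θ α : ℝ) (hα : 0 < α) (nv : Fin J → ℕ)
    (hsmall : ∀ j : Fin J, (j : ℕ) < k → |(nv j : ℝ) - N * θ| ≤ α * N)
    (hbig : ∀ j : Fin J, k ≤ (j : ℕ) →
      (N : ℝ) * θ + 2 * α * N + lamOf nv < (nv j : ℝ)) :
    (1 ≤ tIndex J N nv ∧ tIndex J N nv ≤ k) ∧
      |thetaHat N nv (tIndex J N nv) - θ| ≤ α := by
  have hN0 : (0:ℝ) < N := by exact_mod_cast hN
  have hαN : 0 < α * N := mul_pos hα hN0
  have hlam : 0 ≤ lamOf nv := Real.sqrt_nonneg _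
  set B : ℝ := (N : ℝ) * θ + α * N with hB
  set L : List ℕ := sortedCounts nv with hL
  have hperm : L.Perm (List.ofFn nv) := List.perm_insertionSort _ _
  have hlen : L.length = J := by
    rw [hL, sortedCounts, List.length_insertionSort, List.length_ofFn]
  have hsort : L.Pairwise (· ≤ ·) := List.pairwise_insertionSort _ _
  have hmono : Monotone L.get := hsort.sortedLE.monotone_get
  -- every element of L equals some nv j
  have hmem : ∀ x ∈ L, ∃ j, nv j = x := by
    intro x hx
    have := hperm.mem_iff.mp hx
    rw [List.mem_ofFn] at this
    exact this
  -- small values are ≤ B, big values are > B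
  have hsmallB : ∀ j : Fin J, (j : ℕ) < k → (nv j : ℝ) ≤ B := by
    intro j hj
    have := hsmall j hj
    rw [abs_le] at this
    linarith [this.2]
  have hbigB : ∀ j : Fin J, k ≤ (j : ℕ) → B < (nv j : ℝ) := by
    intro j hj
    have := hbig j hj
    nlinarith
  -- the count of elements ≤ B is exactly k
  have hcount : (Finset.univ.filter (fun i : Fin L.length => (L.get i : ℝ) ≤ B)).card = k := by
    have h1 : (Finset.univ.filter (fun i : Fin L.length => (L.get i : ℝ) ≤ B)).card
        = L.countP (fun m : ℕ => decide ((m : ℝ) ≤ B)) := by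
      conv_rhs => rw [← List.ofFn_get L]
      rw [aux_countP_ofFn]
    have h2 : L.countP (fun m : ℕ => decide ((m : ℝ) ≤ B))
        = (List.ofFn nv).countP (fun m : ℕ => decide ((m : ℝ) ≤ B)) := hperm.countP_eq _
    have h3 : (List.ofFn nv).countP (fun m : ℕ => decide ((m : ℝ) ≤ B))
        = (Finset.univ.filter (fun j : Fin J => ((nv j : ℝ) ≤ B))).card := aux_countP_ofFn nv _
    have h4 : (Finset.univ.filter (fun j : Fin J => ((nv j : ℝ) ≤ B)))
        = Finset.Iio (⟨k, hkJ⟩ : Fin J) := by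
      ext j
      simp only [Finset.mem_filter, Finset.mem_univ, true_and, Finset.mem_Iio, Fin.lt_def]
      constructor
      · intro h
        by_contra hjk
        exact absurd h (not_le.mpr (hbigB j (le_of_not_gt hjk)))
      · intro h; exact hsmallB j h
    rw [h1, h2, h3, h4, Fin.card_Iio]
  have hiff : ∀ i : Fin L.length, ((L.get i : ℝ) ≤ B ↔ (i : ℕ) < k) := by
    intro i
    rw [← hcount]
    exact (aux_monotone_filter_card L.get hmono B i).symm
  -- lower bound on all entries
  have hlow : ∀ i : Fin L.length, (N : ℝ) * θ - α * N ≤ (L.get i : ℝ) := by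
    intro i
    obtain ⟨j, hj⟩ := hmem (L.get i) (List.get_mem L i)
    rw [← hj]
    rcases lt_or_ge (j : ℕ) k with hjk | hjk
    · have := hsmall j hjk; rw [abs_le] at this; linarith [this.1]
    · have := hbig j hjk; nlinarith
  -- thetaHat bounds for 1 ≤ t ≤ k
  have hthetaHat : ∀ t : ℕ, 1 ≤ t → t ≤ k → |thetaHat N nv t - θ| ≤ α := by
    intro t ht1 htk
    have htJ : t ≤ L.length := by omega
    have htlen : (L.take t).length = t := by
      rw [List.length_take]; omega
    have hmemtake : ∀ x ∈ L.take t, ((N:ℝ) * θ - α * N ≤ (x:ℝ) ∧ (x:ℝ) ≤ B) := by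
      intro x hx
      rw [List.mem_take_iff_getElem] at hx
      obtain ⟨i, hi, hix⟩ := hx
      have hit : i < t := by omega
      have hiL : i < L.length := by omega
      have hgx : L.get ⟨i, hiL⟩ = x := by simpa using hix
      constructor
      · rw [← hgx]; exact hlow _
      · rw [← hgx]; exact (hiff ⟨i, hiL⟩).mpr (by simp; omega)
    -- bounds on the sum
    have hsum_ub : (((L.take t).sum : ℕ) : ℝ) ≤ t * B := by
      have : ((L.take t).map (Nat.cast : ℕ → ℝ)).sum ≤ ((L.take t).map (Nat.cast : ℕ → ℝ)).length • B := by
        apply List.sum_le_card_nsmul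
        intro x hx
        rw [List.mem_map] at hx
        obtain ⟨y, hy, rfl⟩ := hx
        exact (hmemtake y hy).2
      rw [List.length_map, htlen, nsmul_eq_mul] at this
      rwa [Nat.cast_list_sum]
    have hsum_lb : (t : ℝ) * ((N:ℝ) * θ - α * N) ≤ (((L.take t).sum : ℕ) : ℝ) := by
      have : ((L.take t).map (Nat.cast : ℕ → ℝ)).length • ((N:ℝ) * θ - α * N) ≤ ((L.take t).map (Nat.cast : ℕ → ℝ)).sum := by
        apply List.card_nsmul_le_sum
        intro x hx
        rw [List.mem_map] at hx
        obtain ⟨y, hy, rfl⟩ := hx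
        exact (hmemtake y hy).1
      rw [List.length_map, htlen, nsmul_eq_mul] at this
      rwa [← Nat.cast_list_sum] at this
    have ht0 : (0:ℝ) < t * N := by
      have : (0:ℝ) < (t:ℝ) := by exact_mod_cast ht1
      positivity
    rw [thetaHat, ← hL, abs_le]
    constructor
    · rw [le_sub_iff_add_le, le_div_iff₀ ht0]
      calc (-α + θ) * ((t:ℝ) * N) = (t : ℝ) * ((N:ℝ) * θ - α * N) := by ring
        _ ≤ _ := hsum_lb
    · rw [sub_le_iff_le_add, div_le_iff₀ ht0]
      calc (((L.take t).sum : ℕ) : ℝ) ≤ t * B := hsum_ub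
        _ = (α + θ) * ((t:ℝ) * N) := by rw [hB]; ring
  -- k is in the defining set of tIndex
  have hkmem : k ∈ {t : ℕ | 1 ≤ t ∧ t < J ∧
      (N : ℝ) * thetaHat N nv t + lamOf nv < (((sortedCounts nv).getD t 0 : ℕ) : ℝ)} := by
    refine ⟨hk, hkJ, ?_⟩
    have hkL : k < L.length := by omega
    have hgetD : (sortedCounts nv).getD k 0 = L.get ⟨k, hkL⟩ := by
      rw [← hL, List.getD_eq_getElem L 0 hkL]
      rfl
    rw [hgetD]
    -- L.get ⟨k⟩ > B, hence equals some nv j with j ≥ k, hence > Nθ + 2αN + λ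
    have hgtB : B < (L.get ⟨k, hkL⟩ : ℝ) := by
      by_contra hle
      have := (hiff ⟨k, hkL⟩).mp (le_of_not_gt hle)
      simp at this
    obtain ⟨j, hj⟩ := hmem _ (List.get_mem L ⟨k, hkL⟩)
    have hjk : k ≤ (j : ℕ) := by
      by_contra hjk'
      have := hsmallB j (lt_of_not_ge hjk')
      rw [hj] at this
      exact absurd hgtB (not_lt.mpr this)
    have hstrong := hbig j hjk
    rw [hj] at hstrong
    have hθk := hthetaHat k hk le_rfl
    rw [abs_le] at hθk
    have : (N:ℝ) * thetaHat N nv k ≤ (N:ℝ) * (θ + α) := by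
      apply mul_le_mul_of_nonneg_left _ (le_of_lt hN0)
      linarith [hθk.2]
    nlinarith
  have hne : {t : ℕ | 1 ≤ t ∧ t < J ∧
      (N : ℝ) * thetaHat N nv t + lamOf nv < (((sortedCounts nv).getD t 0 : ℕ) : ℝ)}.Nonempty :=
    ⟨k, hkmem⟩
  have htmem := Nat.sInf_mem hne
  have ht1 : 1 ≤ tIndex J N nv := htmem.1
  have htk : tIndex J N nv ≤ k := Nat.sInf_le hkmem
  exact ⟨⟨ht1, htk⟩, hthetaHat _ ht1 htk⟩

-- ENNReal pointwise facts
lemma aux_ofReal_pois_tsum (r : ℝ≥0) :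
    ∑' m : ℕ, ENNReal.ofReal (poissonPMFReal r m) = 1 := by
  rw [← ENNReal.ofReal_tsum_of_nonneg (fun _ => poissonPMFReal_nonneg) (aux_pois_summable r),
    (show HasSum (poissonPMFReal r) 1 from poissonPMFRealSum r).tsum_eq, ENNReal.ofReal_one]

lemma aux_total_ennreal {J : ℕ} (ρ : Fin J → ℝ≥0) :
    ∑' nv : Fin J → ℕ, ∏ j, ENNReal.ofReal (poissonPMFReal (ρ j) (nv j)) = 1 := by
  rw [aux_tsum_pi (fun j m => ENNReal.ofReal (poissonPMFReal (ρ j) m))]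
  simp [aux_ofReal_pois_tsum]

lemma aux_prod_summable {J : ℕ} (ρ : Fin J → ℝ≥0) :
    Summable (fun nv : Fin J → ℕ => ∏ j, poissonPMFReal (ρ j) (nv j)) := by
  have h := ENNReal.summable_toReal (f := fun nv : Fin J → ℕ =>
    ∏ j, ENNReal.ofReal (poissonPMFReal (ρ j) (nv j))) (by rw [aux_total_ennreal]; exact ENNReal.one_ne_top)
  convert h using 2 with nv
  rw [ENNReal.toReal_prod]
  exact Finset.prod_congr rfl fun j _ => (ENNReal.toReal_ofReal poissonPMFReal_nonneg).symm

lemma aux_total_real {J : ℕ} (ρ : Fin J → ℝ≥0) :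
    ∑' nv : Fin J → ℕ, ∏ j, poissonPMFReal (ρ j) (nv j) = 1 := by
  have hfin : ∀ nv : Fin J → ℕ, (∏ j, ENNReal.ofReal (poissonPMFReal (ρ j) (nv j))) ≠ ∞ :=
    fun nv => (lt_of_le_of_lt (le_of_le_of_eq (ENNReal.le_tsum nv) (aux_total_ennreal ρ))
      ENNReal.one_lt_top).ne
  calc ∑' nv : Fin J → ℕ, ∏ j, poissonPMFReal (ρ j) (nv j)
      = ∑' nv : Fin J → ℕ, (∏ j, ENNReal.ofReal (poissonPMFReal (ρ j) (nv j))).toReal := by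
        congr 1
        ext nv
        rw [ENNReal.toReal_prod]
        exact (Finset.prod_congr rfl fun j _ => (ENNReal.toReal_ofReal poissonPMFReal_nonneg)).symm
    _ = (∑' nv : Fin J → ℕ, ∏ j, ENNReal.ofReal (poissonPMFReal (ρ j) (nv j))).toReal :=
        (ENNReal.tsum_toReal_eq hfin).symm
    _ = 1 := by rw [aux_total_ennreal ρ, ENNReal.toReal_one]

lemma aux_event_summable {J : ℕ} (ρ : Fin J → ℝ≥0) (P : (Fin J → ℕ) → Prop) :
    Summable (fun nv : Fin J → ℕ => if P nv then ∏ j, poissonPMFReal (ρ j) (nv j) else 0) := by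
  apply Summable.of_nonneg_of_le _ _ (aux_prod_summable ρ)
  · intro nv; split_ifs
    · exact Finset.prod_nonneg fun j _ => poissonPMFReal_nonneg
    · exact le_rfl
  · intro nv; split_ifs
    · exact le_rfl
    · exact Finset.prod_nonneg fun j _ => poissonPMFReal_nonneg

lemma aux_event_nonneg {J : ℕ} (ρ : Fin J → ℝ≥0) (P : (Fin J → ℕ) → Prop) :
    0 ≤ ∑' nv : Fin J → ℕ, if P nv then ∏ j, poissonPMFReal (ρ j) (nv j) else 0 := by
  apply tsum_nonneg
  intro nv; split_ifs
  · exact Finset.prod_nonneg fun j _ => poissonPMFReal_nonneg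
  · exact le_rfl

lemma aux_event_mono {J : ℕ} (ρ : Fin J → ℝ≥0) (P P' : (Fin J → ℕ) → Prop)
    (h : ∀ nv, P nv → P' nv) :
    (∑' nv : Fin J → ℕ, if P nv then ∏ j, poissonPMFReal (ρ j) (nv j) else 0)
      ≤ ∑' nv : Fin J → ℕ, if P' nv then ∏ j, poissonPMFReal (ρ j) (nv j) else 0 := by
  apply Summable.tsum_le_tsum _ (aux_event_summable ρ P) (aux_event_summable ρ P')
  intro nv
  by_cases hP : P nv
  · rw [if_pos hP, if_pos (h nv hP)]
  · rw [if_neg hP]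
    split_ifs
    · exact Finset.prod_nonneg fun j _ => poissonPMFReal_nonneg
    · exact le_rfl

lemma aux_event_compl {J : ℕ} (ρ : Fin J → ℝ≥0) (P Q : (Fin J → ℕ) → Prop)
    (hPQ : ∀ nv, Q nv ↔ ¬ P nv) :
    (∑' nv : Fin J → ℕ, if P nv then ∏ j, poissonPMFReal (ρ j) (nv j) else 0)
      = 1 - ∑' nv : Fin J → ℕ, if Q nv then ∏ j, poissonPMFReal (ρ j) (nv j) else 0 := by
  rw [eq_sub_iff_add_eq]
  calc (∑' nv : Fin J → ℕ, if P nv then ∏ j, poissonPMFReal (ρ j) (nv j) else 0)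
        + (∑' nv : Fin J → ℕ, if Q nv then ∏ j, poissonPMFReal (ρ j) (nv j) else 0)
      = ∑' nv : Fin J → ℕ, ((if P nv then ∏ j, poissonPMFReal (ρ j) (nv j) else 0)
          + (if Q nv then ∏ j, poissonPMFReal (ρ j) (nv j) else 0)) :=
        (Summable.tsum_add (aux_event_summable ρ P) (aux_event_summable ρ Q)).symm
    _ = ∑' nv : Fin J → ℕ, ∏ j, poissonPMFReal (ρ j) (nv j) := by
        congr 1
        ext nv
        by_cases hP : P nv <;> simp [hP, hPQ nv]
    _ = 1 := aux_total_real ρ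

lemma aux_marginal {J : ℕ} (ρ : Fin J → ℝ≥0) (j₀ : Fin J) (pred : ℕ → Prop) :
    (∑' nv : Fin J → ℕ, if pred (nv j₀) then ∏ j, poissonPMFReal (ρ j) (nv j) else 0)
      = ∑' m : ℕ, if pred m then poissonPMFReal (ρ j₀) m else 0 := by
  set g : Fin J → ℕ → ℝ≥0∞ := fun j m =>
    if j = j₀ then (if pred m then ENNReal.ofReal (poissonPMFReal (ρ j) m) else 0)
    else ENNReal.ofReal (poissonPMFReal (ρ j) m) with hg
  -- pointwise identification
  have hpt : ∀ nv : Fin J → ℕ,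
      (if pred (nv j₀) then ∏ j, ENNReal.ofReal (poissonPMFReal (ρ j) (nv j)) else 0)
        = ∏ j, g j (nv j) := by
    intro nv
    by_cases hp : pred (nv j₀)
    · rw [if_pos hp]
      apply Finset.prod_congr rfl
      intro j _
      rw [hg]
      by_cases hj : j = j₀
      · subst hj; simp [hp]
      · simp [hj]
    · rw [if_neg hp]
      symm
      apply Finset.prod_eq_zero (Finset.mem_univ j₀)
      rw [hg]
      simp [hp]
  -- marginal sums of g
  have hgsum : ∀ j : Fin J, ∑' m, g j m =
      if j = j₀ then (∑' m : ℕ, if pred m then ENNReal.ofReal (poissonPMFReal (ρ j₀) m) else 0)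
      else 1 := by
    intro j
    by_cases hj : j = j₀
    · subst hj; simp [hg]
    · simp only [hg, if_neg hj, aux_ofReal_pois_tsum]
  have henn : (∑' nv : Fin J → ℕ,
      if pred (nv j₀) then ∏ j, ENNReal.ofReal (poissonPMFReal (ρ j) (nv j)) else 0)
        = ∑' m : ℕ, if pred m then ENNReal.ofReal (poissonPMFReal (ρ j₀) m) else 0 := by
    calc (∑' nv : Fin J → ℕ,
        if pred (nv j₀) then ∏ j, ENNReal.ofReal (poissonPMFReal (ρ j) (nv j)) else 0)
        = ∑' nv : Fin J → ℕ, ∏ j, g j (nv j) := by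
          congr 1; ext nv; exact hpt nv
      _ = ∏ j, ∑' m, g j m := aux_tsum_pi g
      _ = ∏ j : Fin J, (if j = j₀ then
            (∑' m : ℕ, if pred m then ENNReal.ofReal (poissonPMFReal (ρ j₀) m) else 0) else 1) :=
          Finset.prod_congr rfl (fun j _ => hgsum j)
      _ = ∑' m : ℕ, if pred m then ENNReal.ofReal (poissonPMFReal (ρ j₀) m) else 0 := by
          rw [Finset.prod_ite_eq' Finset.univ j₀
            (fun _ => ∑' m : ℕ, if pred m then ENNReal.ofReal (poissonPMFReal (ρ j₀) m) else 0)]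
          simp
  -- convert both sides to real
  have hrhs_fin : (∑' m : ℕ, if pred m then ENNReal.ofReal (poissonPMFReal (ρ j₀) m) else 0) ≠ ∞ := by
    refine (lt_of_le_of_lt (le_of_le_of_eq ?_ (aux_ofReal_pois_tsum (ρ j₀))) ENNReal.one_lt_top).ne
    apply ENNReal.tsum_le_tsum
    intro m
    split_ifs
    · exact le_rfl
    · exact zero_le
  calc (∑' nv : Fin J → ℕ, if pred (nv j₀) then ∏ j, poissonPMFReal (ρ j) (nv j) else 0)
      = ∑' nv : Fin J → ℕ, ((if pred (nv j₀) then
          ∏ j, ENNReal.ofReal (poissonPMFReal (ρ j) (nv j)) else 0)).toReal := by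
        congr 1
        ext nv
        split_ifs
        · rw [ENNReal.toReal_prod]
          exact (Finset.prod_congr rfl
            fun j _ => (ENNReal.toReal_ofReal poissonPMFReal_nonneg)).symm
        · simp
    _ = ((∑' nv : Fin J → ℕ, if pred (nv j₀) then
          ∏ j, ENNReal.ofReal (poissonPMFReal (ρ j) (nv j)) else 0)).toReal := by
        refine (ENNReal.tsum_toReal_eq ?_).symm
        intro nv
        split_ifs with h
        · exact (ENNReal.prod_lt_top (fun j _ => ENNReal.ofReal_lt_top)).ne
        · exact ENNReal.zero_ne_top
    _ = ((∑' m : ℕ, if pred m then ENNReal.ofReal (poissonPMFReal (ρ j₀) m) else 0)).toReal := by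
        rw [henn]
    _ = ∑' m : ℕ, if pred m then poissonPMFReal (ρ j₀) m else 0 := by
        rw [ENNReal.tsum_toReal_eq]
        · congr 1
          ext m
          split_ifs
          · exact ENNReal.toReal_ofReal poissonPMFReal_nonneg
          · simp
        · intro m
          split_ifs
          · exact ENNReal.ofReal_ne_top
          · exact ENNReal.zero_ne_top

lemma aux_union_bound {J : ℕ} (ρ : Fin J → ℝ≥0) (pred : Fin J → ℕ → Prop)
    (Pex : (Fin J → ℕ) → Prop) (hex : ∀ nv, Pex nv → ∃ j, pred j (nv j)) :
    (∑' nv : Fin J → ℕ, if Pex nv then ∏ j, poissonPMFReal (ρ j) (nv j) else 0)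
      ≤ ∑ j : Fin J, ∑' m : ℕ, if pred j m then poissonPMFReal (ρ j) m else 0 := by
  have hs : ∀ j : Fin J, Summable (fun nv : Fin J → ℕ =>
      if pred j (nv j) then ∏ j', poissonPMFReal (ρ j') (nv j') else 0) :=
    fun j => aux_event_summable ρ _
  have hpt : ∀ nv : Fin J → ℕ,
      (if Pex nv then ∏ j, poissonPMFReal (ρ j) (nv j) else 0)
        ≤ ∑ j : Fin J, (if pred j (nv j) then ∏ j', poissonPMFReal (ρ j') (nv j') else 0) := by
    intro nv
    have hnn : ∀ j : Fin J,
        0 ≤ (if pred j (nv j) then ∏ j', poissonPMFReal (ρ j') (nv j') else 0) := by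
      intro j
      split_ifs
      · exact Finset.prod_nonneg fun _ _ => poissonPMFReal_nonneg
      · exact le_rfl
    split_ifs with h
    · obtain ⟨j₀, hj₀⟩ := hex nv h
      have h2 := Finset.single_le_sum (f := fun j : Fin J =>
        (if pred j (nv j) then ∏ j', poissonPMFReal (ρ j') (nv j') else 0))
        (fun j _ => hnn j) (Finset.mem_univ j₀)
      exact le_trans (le_of_eq (if_pos hj₀).symm) h2
    · exact Finset.sum_nonneg fun j _ => hnn j
  calc (∑' nv : Fin J → ℕ, if Pex nv then ∏ j, poissonPMFReal (ρ j) (nv j) else 0)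
      ≤ ∑' nv : Fin J → ℕ, ∑ j : Fin J,
          (if pred j (nv j) then ∏ j', poissonPMFReal (ρ j') (nv j') else 0) :=
        Summable.tsum_le_tsum hpt (aux_event_summable ρ Pex) (summable_sum (fun j _ => hs j))
    _ = ∑ j : Fin J, ∑' nv : Fin J → ℕ,
          (if pred j (nv j) then ∏ j', poissonPMFReal (ρ j') (nv j') else 0) :=
        Summable.tsum_finsetSum (fun j _ => hs j)
    _ = ∑ j : Fin J, ∑' m : ℕ, if pred j m then poissonPMFReal (ρ j) m else 0 :=
        Finset.sum_congr rfl (fun j _ => aux_marginal ρ j _)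


lemma aux_tail_tendsto_zero (μv : ℝ≥0) (α : ℝ) (hα : 0 < α) (hαμ : α < (μv : ℝ)) :
    Tendsto (fun N : ℕ => ∑' m : ℕ,
        if α * N < |(m : ℝ) - N * (μv : ℝ)| then poissonPMFReal ((N : ℝ≥0) * μv) m else 0)
      atTop (nhds 0) := by
  have hμ : 0 < (μv : ℝ) := lt_trans hα hαμ
  set xu : ℝ := 1 + α / μv with hxu_def
  set xl : ℝ := 1 - α / μv with hxl_def
  have hxu : 1 < xu := by rw [hxu_def]; nlinarith [div_pos hα hμ]
  have hxl0 : 0 < xl := by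
    rw [hxl_def, sub_pos, div_lt_one hμ]; exact hαμ
  have hxl1 : xl ≤ 1 := by
    rw [hxl_def]; nlinarith [div_pos hα hμ]
  set cu : ℝ := α - ((μv : ℝ) + α) * Real.log xu with hcu_def
  set cl : ℝ := -α - ((μv : ℝ) - α) * Real.log xl with hcl_def
  have hlogu : α / ((μv : ℝ) + α) < Real.log xu := by
    have h2 := Real.log_lt_sub_one_of_pos (x := (μv : ℝ) / ((μv : ℝ) + α))
      (by positivity) (ne_of_lt ((div_lt_one (by positivity)).mpr (by linarith)))
    have h1 : Real.log ((μv : ℝ) / ((μv : ℝ) + α)) = - Real.log xu := by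
      rw [← Real.log_inv]
      congr 1
      rw [hxu_def]
      field_simp
    have h3 : (μv : ℝ) / ((μv : ℝ) + α) - 1 = -(α / ((μv : ℝ) + α)) := by
      rw [div_sub_one (ne_of_gt (by positivity : (0:ℝ) < (μv : ℝ) + α)),
        show (μv : ℝ) - ((μv : ℝ) + α) = -α by ring, neg_div]
    rw [h1, h3] at h2
    linarith
  have hlogl : -(α / ((μv : ℝ) - α)) < Real.log xl := by
    have h2 := Real.log_lt_sub_one_of_pos (x := (μv : ℝ) / ((μv : ℝ) - α))
      (div_pos hμ (by linarith)) (ne_of_gt ((one_lt_div (by linarith)).mpr (by linarith)))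
    have h1 : Real.log ((μv : ℝ) / ((μv : ℝ) - α)) = - Real.log xl := by
      rw [← Real.log_inv]
      congr 1
      rw [hxl_def]
      field_simp
    have h3 : (μv : ℝ) / ((μv : ℝ) - α) - 1 = α / ((μv : ℝ) - α) := by
      rw [div_sub_one (ne_of_gt (show (0:ℝ) < (μv : ℝ) - α by linarith)),
        show (μv : ℝ) - ((μv : ℝ) - α) = α by ring]
    rw [h1, h3] at h2
    linarith
  have hcu : cu < 0 := by
    rw [hcu_def]
    have hm := mul_lt_mul_of_pos_left hlogu (show (0:ℝ) < (μv : ℝ) + α by positivity)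
    have h5 : ((μv : ℝ) + α) * (α / ((μv : ℝ) + α)) = α := by
      rw [mul_comm]
      exact div_mul_cancel₀ α (ne_of_gt (by positivity : (0:ℝ) < (μv : ℝ) + α))
    linarith
  have hcl : cl < 0 := by
    rw [hcl_def]
    have hm := mul_lt_mul_of_pos_left hlogl (show (0:ℝ) < (μv : ℝ) - α by linarith)
    have h5 : ((μv : ℝ) - α) * (α / ((μv : ℝ) - α)) = α := by
      rw [mul_comm]
      exact div_mul_cancel₀ α (ne_of_gt (show (0:ℝ) < (μv : ℝ) - α by linarith))
    have hring : ((μv : ℝ) - α) * (-(α / ((μv : ℝ) - α)))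
        = -(((μv : ℝ) - α) * (α / ((μv : ℝ) - α))) := by ring
    linarith
  have hxl1' : (μv : ℝ) * (xl - 1) = -α := by
    rw [hxl_def, show (1 - α / (μv : ℝ)) - 1 = -(α / (μv : ℝ)) by ring, mul_neg, mul_comm,
      div_mul_cancel₀ α (ne_of_gt hμ)]
  have hxu1' : (μv : ℝ) * (xu - 1) = α := by
    rw [hxu_def, show (1 + α / (μv : ℝ)) - 1 = α / (μv : ℝ) by ring, mul_comm,
      div_mul_cancel₀ α (ne_of_gt hμ)]
  have hbound : ∀ N : ℕ, (∑' m : ℕ,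
      if α * N < |(m : ℝ) - N * (μv : ℝ)| then poissonPMFReal ((N : ℝ≥0) * μv) m else 0)
        ≤ Real.exp (N * cl) + Real.exp (N * cu) := by
    intro N
    set r : ℝ≥0 := (N : ℝ≥0) * μv with hr
    have hrr : (r : ℝ) = N * (μv : ℝ) := by rw [hr]; push_cast; ring
    have hsum_lower : Summable (fun m : ℕ =>
        if (m : ℝ) < N * (μv : ℝ) - α * N then poissonPMFReal r m else 0) := by
      apply Summable.of_nonneg_of_le _ _ (aux_pois_summable r)
      · intro m; split_ifs; exacts [poissonPMFReal_nonneg, le_rfl]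
      · intro m; split_ifs; exacts [le_rfl, poissonPMFReal_nonneg]
    have hsum_upper : Summable (fun m : ℕ =>
        if N * (μv : ℝ) + α * N < (m : ℝ) then poissonPMFReal r m else 0) := by
      apply Summable.of_nonneg_of_le _ _ (aux_pois_summable r)
      · intro m; split_ifs; exacts [poissonPMFReal_nonneg, le_rfl]
      · intro m; split_ifs; exacts [le_rfl, poissonPMFReal_nonneg]
    have hpt : ∀ m : ℕ, (if α * N < |(m : ℝ) - N * (μv : ℝ)| then poissonPMFReal r m else 0)
        ≤ (if (m : ℝ) < N * (μv : ℝ) - α * N then poissonPMFReal r m else 0)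
          + (if N * (μv : ℝ) + α * N < (m : ℝ) then poissonPMFReal r m else 0) := by
      intro m
      have hnn : (0:ℝ) ≤ poissonPMFReal r m := poissonPMFReal_nonneg
      by_cases h : α * N < |(m : ℝ) - N * (μv : ℝ)|
      · rw [if_pos h]
        by_cases h2 : (m : ℝ) < N * (μv : ℝ) - α * N
        · rw [if_pos h2]
          have : (0:ℝ) ≤ (if N * (μv : ℝ) + α * N < (m : ℝ) then poissonPMFReal r m else 0) := by
            split_ifs; exacts [hnn, le_rfl]
          linarith
        · have h3 : N * (μv : ℝ) + α * N < (m : ℝ) := by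
            by_contra h3
            apply absurd h
            rw [not_lt]
            have hN0 : (0:ℝ) ≤ α * N := by positivity
            exact abs_le.mpr ⟨by push_neg at h2; linarith, by push_neg at h3; linarith⟩
          rw [if_neg h2, if_pos h3]
          linarith
      · rw [if_neg h]
        have h4 : (0:ℝ) ≤ (if (m : ℝ) < N * (μv : ℝ) - α * N then poissonPMFReal r m else 0) := by
          split_ifs; exacts [hnn, le_rfl]
        have h5 : (0:ℝ) ≤ (if N * (μv : ℝ) + α * N < (m : ℝ) then poissonPMFReal r m else 0) := by
          split_ifs; exacts [hnn, le_rfl]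
        linarith
    calc (∑' m : ℕ, if α * N < |(m : ℝ) - N * (μv : ℝ)| then poissonPMFReal r m else 0)
        ≤ ∑' m : ℕ, ((if (m : ℝ) < N * (μv : ℝ) - α * N then poissonPMFReal r m else 0)
            + (if N * (μv : ℝ) + α * N < (m : ℝ) then poissonPMFReal r m else 0)) := by
          apply Summable.tsum_le_tsum hpt _ (hsum_lower.add hsum_upper)
          apply Summable.of_nonneg_of_le _ hpt (hsum_lower.add hsum_upper)
          intro m; split_ifs; exacts [poissonPMFReal_nonneg, le_rfl]
      _ = (∑' m : ℕ, if (m : ℝ) < N * (μv : ℝ) - α * N then poissonPMFReal r m else 0)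
            + ∑' m : ℕ, (if N * (μv : ℝ) + α * N < (m : ℝ) then poissonPMFReal r m else 0) :=
          Summable.tsum_add hsum_lower hsum_upper
      _ ≤ Real.exp (N * cl) + Real.exp (N * cu) := by
          apply add_le_add
          · refine le_trans (aux_chernoff_lower r (N * (μv : ℝ) - α * N) xl hxl0 hxl1) ?_
            apply le_of_eq
            congr 1
            rw [hrr, hcl_def]
            linear_combination (N : ℝ) * hxl1'
          · refine le_trans (aux_chernoff_upper r (N * (μv : ℝ) + α * N) xu hxu) ?_
            apply le_of_eq
            congr 1
            rw [hrr, hcu_def]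
            linear_combination (N : ℝ) * hxu1'
  have hz : Tendsto (fun N : ℕ => Real.exp (N * cl) + Real.exp (N * cu)) atTop (nhds 0) := by
    rw [show (0 : ℝ) = 0 + 0 by norm_num]
    apply Tendsto.add
    · exact Real.tendsto_exp_atBot.comp
        ((tendsto_natCast_atTop_atTop (R := ℝ)).atTop_mul_const_of_neg hcl)
    · exact Real.tendsto_exp_atBot.comp
        ((tendsto_natCast_atTop_atTop (R := ℝ)).atTop_mul_const_of_neg hcu)
  refine squeeze_zero (fun N => ?_) hbound hz
  apply tsum_nonneg
  intro m; split_ifs; exacts [poissonPMFReal_nonneg, le_rfl]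

lemma aux_ite_congr {c : Prop} (i1 i2 : Decidable c) (x y : ℝ) :
    @ite ℝ c i1 x y = @ite ℝ c i2 x y := by
  rw [Subsingleton.elim i1 i2]

lemma aux_tsum_ite_congr {J : ℕ} (ρ : Fin J → ℝ≥0) (P : (Fin J → ℕ) → Prop)
    (i : ∀ nv, Decidable (P nv)) :
    (∑' nv : Fin J → ℕ, @ite ℝ (P nv) (i nv) (∏ j, poissonPMFReal (ρ j) (nv j)) 0)
      = ∑' nv : Fin J → ℕ,
        @ite ℝ (P nv) (Classical.propDecidable (P nv)) (∏ j, poissonPMFReal (ρ j) (nv j)) 0 :=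
  tsum_congr (fun nv => aux_ite_congr (i nv) (Classical.propDecidable (P nv)) _ _)

lemma aux_bridge {J : ℕ} (ρ : Fin J → ℝ≥0) (P : (Fin J → ℕ) → Prop)
    (i : ∀ nv, Decidable (P nv)) :
    (∑' nv : Fin J → ℕ, @ite ℝ (P nv) (i nv) (∏ j, poissonPMFReal (ρ j) (nv j)) 0)
      = 1 - ∑' nv : Fin J → ℕ,
        @ite ℝ (¬ P nv) (Classical.propDecidable (¬ P nv)) (∏ j, poissonPMFReal (ρ j) (nv j)) 0 :=
  (aux_tsum_ite_congr ρ P i).trans (aux_event_compl ρ P (fun nv => ¬ P nv) (fun nv => Iff.rfl))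

lemma aux_key (J k : ℕ) (hk : 1 ≤ k) (hkJ : k < J) (θ : NNReal) (hθ : 0 < θ)
    (μ : Fin J → NNReal)
    (hμ1 : ∀ j : Fin J, (j : ℕ) < k → μ j = θ)
    (hμ2 : ∀ j : Fin J, k ≤ (j : ℕ) → θ < μ j)
    (α : ℝ) (hα : 0 < α) (hαθ : 2 * α ≤ (θ : ℝ))
    (hgap : ∀ j : Fin J, k ≤ (j : ℕ) → (θ : ℝ) + 4 * α ≤ (μ j : ℝ))
    (E : ℕ → (Fin J → ℕ) → Prop)
    (hE : ∀ N nv, E N nv → ¬((1 ≤ tIndex J N nv ∧ tIndex J N nv ≤ k) ∧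
      |thetaHat N nv (tIndex J N nv) - (θ : ℝ)| ≤ α)) :
    Tendsto (fun N : ℕ => ∑' nv : Fin J → ℕ,
        if E N nv then ∏ j, poissonPMFReal ((N : ℝ≥0) * μ j) (nv j) else 0)
      atTop (nhds 0) := by
  have hθR : (0:ℝ) < (θ : ℝ) := hθ
  have hθμ : ∀ j : Fin J, (θ : ℝ) ≤ (μ j : ℝ) := by
    intro j
    rcases lt_or_ge (j : ℕ) k with h | h
    · rw [hμ1 j h]
    · exact le_of_lt (by exact_mod_cast hμ2 j h)
  have hαμ : ∀ j : Fin J, α < (μ j : ℝ) := fun j => lt_of_lt_of_le (by linarith) (hθμ j)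
  have hJ0 : 0 < J := by omega
  set M : ℝ := ((Finset.univ.sup μ : ℝ≥0) : ℝ) with hM
  have hμM : ∀ j : Fin J, (μ j : ℝ) ≤ M := by
    intro j
    rw [hM]
    exact_mod_cast (Finset.le_sup (Finset.mem_univ j) : μ j ≤ Finset.univ.sup μ)
  have hM0 : 0 ≤ M := le_trans hθR.le (le_trans (hθμ ⟨0, hJ0⟩) (hμM ⟨0, hJ0⟩))
  -- the sum of marginal tails tends to 0
  have hsum0 : Tendsto (fun N : ℕ => ∑ j : Fin J, ∑' m : ℕ,
      if α * N < |(m : ℝ) - N * (μ j : ℝ)| then poissonPMFReal ((N : ℝ≥0) * μ j) m else 0)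
      atTop (nhds 0) := by
    have := tendsto_finset_sum (Finset.univ : Finset (Fin J))
      (fun j _ => aux_tail_tendsto_zero (μ j) α hα (hαμ j))
    simpa using this
  -- eventual domination
  have hev : ∀ᶠ N : ℕ in atTop, (∑' nv : Fin J → ℕ,
      if E N nv then ∏ j, poissonPMFReal ((N : ℝ≥0) * μ j) (nv j) else 0)
        ≤ ∑ j : Fin J, ∑' m : ℕ,
          if α * N < |(m : ℝ) - N * (μ j : ℝ)| then poissonPMFReal ((N : ℝ≥0) * μ j) m else 0 := by
    rw [eventually_atTop]
    refine ⟨⌈(M + α) / (α * α)⌉₊ + 1, fun N hN => ?_⟩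
    have hN1 : 1 ≤ N := le_trans (Nat.le_add_left 1 _) hN
    have hNpos : (0:ℝ) < N := by exact_mod_cast hN1
    have hNM : (M + α) / (α * α) < (N : ℝ) := by
      have h1 : ((⌈(M + α) / (α * α)⌉₊ : ℝ)) < N := by
        exact_mod_cast Nat.lt_of_lt_of_le (Nat.lt_succ_self _) hN
      exact lt_of_le_of_lt (Nat.le_ceil _) h1
    have hsqrt : Real.sqrt ((M + α) * N) < α * N := by
      rw [show α * N = Real.sqrt ((α * N) ^ 2) by rw [Real.sqrt_sq (by positivity)]]
      apply Real.sqrt_lt_sqrt (by positivity)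
      have : (M + α) < α * α * N := by
        rw [div_lt_iff₀ (by positivity)] at hNM
        linarith
      calc (M + α) * N < (α * α * N) * N := by
            apply mul_lt_mul_of_pos_right this hNpos
        _ = (α * N) ^ 2 := by ring
    -- on the good event, E fails
    have himp : ∀ nv : Fin J → ℕ, E N nv →
        ∃ j : Fin J, α * N < |(nv j : ℝ) - N * (μ j : ℝ)| := by
      intro nv hEnv
      by_contra hcon
      push_neg at hcon
      -- lamOf bound
      have hlam : lamOf nv < α * N := by
        obtain ⟨j₀, _, hj₀⟩ := Finset.exists_mem_eq_sup (Finset.univ : Finset (Fin J))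
          ⟨⟨0, hJ0⟩, Finset.mem_univ _⟩ nv
        have hnvj : ((Finset.univ.sup nv : ℕ) : ℝ) ≤ (M + α) * N := by
          rw [hj₀]
          have h1 := hcon j₀
          have h2 := abs_le.mp h1
          have := hμM j₀
          nlinarith [h2.2]
        refine lt_of_le_of_lt ?_ hsqrt
        rw [lamOf]
        exact Real.sqrt_le_sqrt hnvj
      have hsmall : ∀ j : Fin J, (j : ℕ) < k → |(nv j : ℝ) - N * (θ : ℝ)| ≤ α * N := by
        intro j hj
        have := hcon j
        rw [hμ1 j hj] at this
        linarith [this]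
      have hbig : ∀ j : Fin J, k ≤ (j : ℕ) →
          (N : ℝ) * (θ : ℝ) + 2 * α * N + lamOf nv < (nv j : ℝ) := by
        intro j hj
        have h1 := abs_le.mp (hcon j)
        have h2 := hgap j hj
        nlinarith [h1.1]
      exact hE N nv hEnv (claimA k N hk hkJ hN1 (θ : ℝ) α hα nv hsmall hbig)
    refine le_trans
      (aux_event_mono (fun j => (N : ℝ≥0) * μ j) (E N)
        (fun nv => ∃ j : Fin J, α * N < |(nv j : ℝ) - N * (μ j : ℝ)|) himp)
      (aux_union_bound (fun j => (N : ℝ≥0) * μ j)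
        (fun j m => α * N < |(m : ℝ) - N * (μ j : ℝ)|)
        (fun nv => ∃ j : Fin J, α * N < |(nv j : ℝ) - N * (μ j : ℝ)|) (fun nv h => h))
  exact squeeze_zero' (Eventually.of_forall
    (fun N => aux_event_nonneg (fun j => (N : ℝ≥0) * μ j) (E N))) hev hsum0

theorem two_step_estimator_consistent (J k : ℕ) (hk : 1 ≤ k) (hkJ : k < J)
    (θ : NNReal) (hθ : 0 < θ) (μ : Fin J → NNReal)
    (hμ1 : ∀ j : Fin J, (j : ℕ) < k → μ j = θ)
    (hμ2 : ∀ j : Fin J, k ≤ (j : ℕ) → θ < μ j) :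
    Tendsto (fun N : ℕ =>
        ∑' nv : Fin J → ℕ,
          if 1 ≤ tIndex J N nv ∧ tIndex J N nv ≤ k
          then ∏ j, poissonPMFReal (N * μ j) (nv j) else 0)
      atTop (nhds 1) ∧
    ∀ ε : ℝ, 0 < ε →
      Tendsto (fun N : ℕ =>
          ∑' nv : Fin J → ℕ,
            if 1 ≤ tIndex J N nv ∧ tIndex J N nv ≤ k ∧
                ε < |thetaHat N nv (tIndex J N nv) - (θ : ℝ)|
            then ∏ j, poissonPMFReal (N * μ j) (nv j) else 0)
        atTop (nhds 0) := by
  have hθR : (0:ℝ) < (θ : ℝ) := hθ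
  -- the minimal gap
  have hne : (Finset.univ.filter (fun j : Fin J => k ≤ (j : ℕ))).Nonempty :=
    ⟨⟨k, hkJ⟩, by simp⟩
  set δ : ℝ := (Finset.univ.filter (fun j : Fin J => k ≤ (j : ℕ))).inf' hne
    (fun j => (μ j : ℝ) - (θ : ℝ)) with hδ
  have hδpos : 0 < δ := by
    rw [hδ]
    refine (Finset.lt_inf'_iff hne).mpr ?_
    intro j hj
    rw [Finset.mem_filter] at hj
    have := hμ2 j hj.2
    have : (θ : ℝ) < (μ j : ℝ) := by exact_mod_cast this
    linarith
  have hδle : ∀ j : Fin J, k ≤ (j : ℕ) → δ ≤ (μ j : ℝ) - (θ : ℝ) := by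
    intro j hj
    rw [hδ]
    exact Finset.inf'_le (fun j : Fin J => (μ j : ℝ) - (θ : ℝ))
      (Finset.mem_filter.mpr ⟨Finset.mem_univ j, hj⟩)
  set α₁ : ℝ := min (δ / 4) ((θ : ℝ) / 2) with hα₁
  have hα₁pos : 0 < α₁ := lt_min (by linarith) (by linarith)
  have hα₁θ : 2 * α₁ ≤ (θ : ℝ) := by
    have := min_le_right (δ / 4) ((θ : ℝ) / 2)
    rw [← hα₁] at this
    linarith
  have hα₁gap : ∀ j : Fin J, k ≤ (j : ℕ) → (θ : ℝ) + 4 * α₁ ≤ (μ j : ℝ) := by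
    intro j hj
    have h1 := min_le_left (δ / 4) ((θ : ℝ) / 2)
    rw [← hα₁] at h1
    have := hδle j hj
    linarith
  constructor
  · -- part 1
    have hkey := aux_key J k hk hkJ θ hθ μ hμ1 hμ2 α₁ hα₁pos hα₁θ hα₁gap
      (fun N nv => ¬(1 ≤ tIndex J N nv ∧ tIndex J N nv ≤ k))
      (fun N nv h hcon => h hcon.1)
    have h1 := Tendsto.const_sub (1:ℝ) hkey
    rw [sub_zero] at h1
    refine Tendsto.congr (fun N => ?_) h1
    exact (aux_bridge (fun j => (N : ℝ≥0) * μ j)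
      (fun nv => 1 ≤ tIndex J N nv ∧ tIndex J N nv ≤ k) (fun nv => inferInstance)).symm
  · -- part 2
    intro ε hε
    set α₂ : ℝ := min α₁ (ε / 2) with hα₂
    have hα₂pos : 0 < α₂ := lt_min hα₁pos (by linarith)
    have hα₂θ : 2 * α₂ ≤ (θ : ℝ) := by
      have := min_le_left α₁ (ε / 2)
      rw [← hα₂] at this
      linarith
    have hα₂gap : ∀ j : Fin J, k ≤ (j : ℕ) → (θ : ℝ) + 4 * α₂ ≤ (μ j : ℝ) := by
      intro j hj
      have h1 := min_le_left α₁ (ε / 2)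
      rw [← hα₂] at h1
      have := hα₁gap j hj
      linarith
    have hα₂ε : α₂ < ε := lt_of_le_of_lt (min_le_right _ _) (by linarith)
    have hkey := aux_key J k hk hkJ θ hθ μ hμ1 hμ2 α₂ hα₂pos hα₂θ hα₂gap
      (fun N nv => 1 ≤ tIndex J N nv ∧ tIndex J N nv ≤ k ∧
        ε < |thetaHat N nv (tIndex J N nv) - (θ : ℝ)|)
      (fun N nv h hcon => absurd hcon.2 (not_le.mpr (lt_trans hα₂ε h.2.2)))
    refine Tendsto.congr (fun N => ?_) hkey
    exact (aux_tsum_ite_congr (fun j => (N : ℝ≥0) * μ j)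
      (fun nv => 1 ≤ tIndex J N nv ∧ tIndex J N nv ≤ k ∧
        ε < |thetaHat N nv (tIndex J N nv) - (θ : ℝ)|) (fun nv => inferInstance)).symm
end

section
/- For c > 0 and n ≥ 0: if n ≤ λ then b = 0 maximizes g(b) = n·b − c·e^b − λ|b| over b ≥ 0; if n > λ and (n − λ)/c > 1 then b = ln((n−λ)/c) > 0 is the unique maximizer of g over b ≥ 0. -/
open Real

theorem constrained_soft_threshold (c n lam : ℝ) (hc : 0 < c) (hn : 0 ≤ n) (hlam : 0 < lam) :
    (n ≤ lam → ∀ b : ℝ, 0 ≤ b →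
      n * b - c * Real.exp b - lam * |b| ≤ n * 0 - c * Real.exp 0 - lam * |(0 : ℝ)|) ∧
    (lam < n → 1 < (n - lam) / c →
      0 < Real.log ((n - lam) / c) ∧
      (∀ b : ℝ, 0 ≤ b →
        n * b - c * Real.exp b - lam * |b|
          ≤ n * Real.log ((n - lam) / c) - c * Real.exp (Real.log ((n - lam) / c))
            - lam * |Real.log ((n - lam) / c)|) ∧
      (∀ b : ℝ, 0 ≤ b → b ≠ Real.log ((n - lam) / c) →
        n * b - c * Real.exp b - lam * |b|
          < n * Real.log ((n - lam) / c) - c * Real.exp (Real.log ((n - lam) / c))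
            - lam * |Real.log ((n - lam) / c)|)) := by
  constructor
  · intro hle b hb
    rw [abs_of_nonneg hb]
    simp only [mul_zero, Real.exp_zero, abs_zero]
    have h2 : (1 : ℝ) ≤ Real.exp b := Real.one_le_exp hb
    nlinarith
  · intro hlt hdiv
    set m := n - lam with hm
    have hmpos : 0 < m := by simp only [hm]; linarith
    have hq : 0 < m / c := div_pos hmpos hc
    set B := Real.log (m / c) with hB
    have hBpos : 0 < B := Real.log_pos hdiv
    have hexpB : Real.exp B = m / c := Real.exp_log hq
    have hcB : c * Real.exp B = m := by
      rw [hexpB]; field_simp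
    have key : ∀ b : ℝ, m * (1 + (b - B)) ≤ c * Real.exp b := by
      intro b
      have := Real.add_one_le_exp (b - B)
      have h2 : c * Real.exp b = m * Real.exp (b - B) := by
        rw [Real.exp_sub, hexpB]; field_simp
      rw [h2]
      nlinarith
    refine ⟨hBpos, ?_, ?_⟩
    · intro b hb
      rw [abs_of_nonneg hb, abs_of_nonneg hBpos.le]
      have := key b
      rw [hcB]
      nlinarith
    · intro b hb hne
      rw [abs_of_nonneg hb, abs_of_nonneg hBpos.le]
      have h2 : c * Real.exp b = m * Real.exp (b - B) := by
        rw [Real.exp_sub, hexpB]; field_simp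
      have hstrict : (b - B) + 1 < Real.exp (b - B) :=
        Real.add_one_lt_exp (sub_ne_zero_of_ne hne)
      rw [hcB, h2]
      nlinarith
end
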